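/- Let X be a Banach space, M > 0, and Ξ = C(ℝ,X) with the Fréchet metric d_Ξ. (i) For all ξ₁, ξ₂ ∈ Ξ with sup_{s∈ℝ}‖ξ₁(s)‖ ≤ M and sup_{s∈ℝ}‖ξ₂(s)‖ ≤ M, the evaluation at 0 satisfies ‖ξ₁(0) − ξ₂(0)‖ ≤ (1 + 2M) d_Ξ(ξ₁, ξ₂). (ii) Consequently, for every continuous g : ℝ → X with sup_{t∈ℝ}‖g(t)‖ ≤ M, the box-counting dimension of the range g(ℝ) in X is at most the box-counting dimension of the orbit {θ_t g : t ∈ ℝ} in (Ξ, d_Ξ); in particular, if g(ℝ) has infinite box-counting dimension in X, then the hull H_Ξ(g) has infinite box-counting dimension in Ξ. -/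

import Mathlib

open Filter Set Metric
open scoped ENNReal NNReal Topology

/-- `d^{(n)}(ξ₁,ξ₂) = max_{s ∈ [-n,n]} ‖ξ₁(s) - ξ₂(s)‖`. -/
noncomputable def dseg {X : Type*} [NormedAddCommGroup X] (n : ℕ) (ξ₁ ξ₂ : C(ℝ, X)) : ℝ :=
  sSup ((fun s => ‖ξ₁ s - ξ₂ s‖) '' Set.Icc (-(n:ℝ)) (n:ℝ))

/-- The Fréchet metric on `Ξ = C(ℝ,X)`:
`d_Ξ(ξ₁,ξ₂) = Σₙ 2⁻ⁿ d⁽ⁿ⁾(ξ₁,ξ₂)/(1 + d⁽ⁿ⁾(ξ₁,ξ₂))`. -/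
noncomputable def dXi {X : Type*} [NormedAddCommGroup X] (ξ₁ ξ₂ : C(ℝ, X)) : ℝ :=
  ∑' n : ℕ, (1 / 2 ^ n : ℝ) * (dseg n ξ₁ ξ₂ / (1 + dseg n ξ₁ ξ₂))

/-- The translation group `(θ_t ξ)(s) = ξ(t+s)` on `C(ℝ,X)`. -/
noncomputable def shift {X : Type*} [NormedAddCommGroup X] (t : ℝ) (ξ : C(ℝ, X)) : C(ℝ, X) :=
  ξ.comp ⟨fun s => t + s, by continuity⟩

noncomputable def coverN {X : Type*} [MetricSpace X] (K : Set X) (r : ℝ) : ℝ≥0∞ :=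
  sInf {n : ℝ≥0∞ | ∃ s : Finset X, (s.card : ℝ≥0∞) = n ∧ K ⊆ ⋃ x ∈ s, Metric.ball x r}

noncomputable def dimBox {X : Type*} [MetricSpace X] (K : Set X) : ℝ≥0∞ :=
  Filter.limsup (fun r : ℝ =>
    if coverN K r = ⊤ then (⊤ : ℝ≥0∞)
    else ENNReal.ofReal (Real.log (coverN K r).toReal / (-Real.log r)))
    (nhdsWithin 0 (Set.Ioi 0))

/-- Covering number of a subset of `Ξ = C(ℝ,X)` by `dXi`-balls of radius `r`. -/
noncomputable def coverNXi {X : Type*} [NormedAddCommGroup X] (K : Set C(ℝ, X)) (r : ℝ) :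
    ℝ≥0∞ :=
  sInf {n : ℝ≥0∞ | ∃ s : Finset C(ℝ, X), (s.card : ℝ≥0∞) = n ∧
    ∀ ξ ∈ K, ∃ c ∈ s, dXi c ξ < r}

/-- Box-counting dimension in `(Ξ, d_Ξ)`. -/
noncomputable def dimBoxXi {X : Type*} [NormedAddCommGroup X] (K : Set C(ℝ, X)) : ℝ≥0∞ :=
  Filter.limsup (fun r : ℝ =>
    if coverNXi K r = ⊤ then (⊤ : ℝ≥0∞)
    else ENNReal.ofReal (Real.log (coverNXi K r).toReal / (-Real.log r)))
    (nhdsWithin 0 (Set.Ioi 0))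

/-- The hull of `g` in `(Ξ, d_Ξ)`: the `d_Ξ`-closure of the orbit `{θ_t g : t ∈ ℝ}`. -/
def hullXi {X : Type*} [NormedAddCommGroup X] (g : C(ℝ, X)) : Set C(ℝ, X) :=
  {ξ : C(ℝ, X) | ∀ ε > (0:ℝ), ∃ t : ℝ, dXi (shift t g) ξ < ε}

section dsegLemmas
variable {X : Type*} [NormedAddCommGroup X] (n : ℕ) (ξ₁ ξ₂ ξ₃ : C(ℝ, X))

lemma zero_mem_IccN : (0:ℝ) ∈ Set.Icc (-(n:ℝ)) (n:ℝ) :=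
  ⟨neg_nonpos.2 (Nat.cast_nonneg n), Nat.cast_nonneg n⟩

lemma dseg_bddAbove : BddAbove ((fun s => ‖ξ₁ s - ξ₂ s‖) '' Set.Icc (-(n:ℝ)) (n:ℝ)) :=
  isCompact_Icc.bddAbove_image ((ξ₁.continuous.sub ξ₂.continuous).norm.continuousOn)

lemma le_dseg {s : ℝ} (hs : s ∈ Set.Icc (-(n:ℝ)) (n:ℝ)) :
    ‖ξ₁ s - ξ₂ s‖ ≤ dseg n ξ₁ ξ₂ :=
  le_csSup (dseg_bddAbove n ξ₁ ξ₂) (Set.mem_image_of_mem _ hs)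

lemma dseg_nonneg : 0 ≤ dseg n ξ₁ ξ₂ :=
  (norm_nonneg _).trans (le_dseg n ξ₁ ξ₂ (zero_mem_IccN n))

lemma dseg_le {C : ℝ} (h : ∀ s ∈ Set.Icc (-(n:ℝ)) (n:ℝ), ‖ξ₁ s - ξ₂ s‖ ≤ C) :
    dseg n ξ₁ ξ₂ ≤ C := by
  apply csSup_le ⟨_, Set.mem_image_of_mem _ (zero_mem_IccN n)⟩
  rintro _ ⟨s, hs, rfl⟩; exact h s hs

lemma dseg_self (ξ : C(ℝ, X)) : dseg n ξ ξ = 0 :=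
  le_antisymm (dseg_le n ξ ξ (by simp)) (dseg_nonneg n ξ ξ)

lemma dseg_comm : dseg n ξ₁ ξ₂ = dseg n ξ₂ ξ₁ := by
  unfold dseg
  congr 1
  ext x
  constructor <;> (rintro ⟨s, hs, rfl⟩; exact ⟨s, hs, (norm_sub_rev _ _)⟩)

lemma dseg_triangle : dseg n ξ₁ ξ₃ ≤ dseg n ξ₁ ξ₂ + dseg n ξ₂ ξ₃ := by
  apply dseg_le
  intro s hs
  calc ‖ξ₁ s - ξ₃ s‖ ≤ ‖ξ₁ s - ξ₂ s‖ + ‖ξ₂ s - ξ₃ s‖ := by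
        simpa using norm_add_le (ξ₁ s - ξ₂ s) (ξ₂ s - ξ₃ s)
    _ ≤ dseg n ξ₁ ξ₂ + dseg n ξ₂ ξ₃ :=
        add_le_add (le_dseg n ξ₁ ξ₂ hs) (le_dseg n ξ₂ ξ₃ hs)

lemma dseg_zero : dseg 0 ξ₁ ξ₂ = ‖ξ₁ 0 - ξ₂ 0‖ := by
  unfold dseg
  norm_num

end dsegLemmas

lemma frac_mono {a b : ℝ} (ha : 0 ≤ a) (hab : a ≤ b) : a / (1 + a) ≤ b / (1 + b) := by
  have h1 : (0:ℝ) < 1 + a := by linarith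
  have h2 : (0:ℝ) < 1 + b := by linarith
  rw [div_le_div_iff₀ h1 h2]
  nlinarith

lemma frac_subadd {a b : ℝ} (ha : 0 ≤ a) (hb : 0 ≤ b) :
    (a + b) / (1 + (a + b)) ≤ a / (1 + a) + b / (1 + b) := by
  have h1 : (0:ℝ) < 1 + a := by linarith
  have h2 : (0:ℝ) < 1 + b := by linarith
  have h3 : (0:ℝ) < 1 + (a + b) := by linarith
  rw [div_add_div _ _ (ne_of_gt h1) (ne_of_gt h2), div_le_div_iff₀ h3 (by positivity)]
  nlinarith [mul_nonneg ha hb, mul_nonneg (mul_nonneg ha hb) (add_nonneg ha hb)]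

section dXiLemmas
variable {X : Type*} [NormedAddCommGroup X] (ξ₁ ξ₂ ξ₃ : C(ℝ, X))

lemma dXi_term_nonneg (n : ℕ) : 0 ≤ (1 / 2 ^ n : ℝ) * (dseg n ξ₁ ξ₂ / (1 + dseg n ξ₁ ξ₂)) := by
  have := dseg_nonneg n ξ₁ ξ₂
  positivity

lemma dXi_summable : Summable (fun n : ℕ => (1 / 2 ^ n : ℝ) * (dseg n ξ₁ ξ₂ / (1 + dseg n ξ₁ ξ₂))) := by
  refine Summable.of_nonneg_of_le (dXi_term_nonneg ξ₁ ξ₂) ?_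
    (summable_geometric_of_lt_one (by norm_num : (0:ℝ) ≤ 1/2) (by norm_num))
  · intro n
    have hd := dseg_nonneg n ξ₁ ξ₂
    have h1 : dseg n ξ₁ ξ₂ / (1 + dseg n ξ₁ ξ₂) ≤ 1 := by
      rw [div_le_one (by linarith)]; linarith
    calc (1 / 2 ^ n : ℝ) * (dseg n ξ₁ ξ₂ / (1 + dseg n ξ₁ ξ₂)) ≤ (1 / 2 ^ n : ℝ) * 1 :=
          mul_le_mul_of_nonneg_left h1 (by positivity)
      _ = (1/2:ℝ)^n := by rw [mul_one, div_pow, one_pow]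

lemma dXi_nonneg : 0 ≤ dXi ξ₁ ξ₂ := tsum_nonneg (dXi_term_nonneg ξ₁ ξ₂)

lemma frac0_le_dXi : dseg 0 ξ₁ ξ₂ / (1 + dseg 0 ξ₁ ξ₂) ≤ dXi ξ₁ ξ₂ := by
  have h := Summable.le_tsum (dXi_summable ξ₁ ξ₂) 0 (fun j _ => dXi_term_nonneg ξ₁ ξ₂ j)
  calc dseg 0 ξ₁ ξ₂ / (1 + dseg 0 ξ₁ ξ₂)
      = (1 / 2 ^ (0:ℕ) : ℝ) * (dseg 0 ξ₁ ξ₂ / (1 + dseg 0 ξ₁ ξ₂)) := by norm_num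
    _ ≤ dXi ξ₁ ξ₂ := h

lemma dXi_comm : dXi ξ₁ ξ₂ = dXi ξ₂ ξ₁ := by
  unfold dXi; congr 1; ext n; rw [dseg_comm]

lemma dXi_self (ξ : C(ℝ, X)) : dXi ξ ξ = 0 := by
  simp [dXi, dseg_self]

lemma dXi_triangle : dXi ξ₁ ξ₃ ≤ dXi ξ₁ ξ₂ + dXi ξ₂ ξ₃ := by
  have h : ∀ n : ℕ, (1 / 2 ^ n : ℝ) * (dseg n ξ₁ ξ₃ / (1 + dseg n ξ₁ ξ₃)) ≤
      (1 / 2 ^ n : ℝ) * (dseg n ξ₁ ξ₂ / (1 + dseg n ξ₁ ξ₂)) +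
      (1 / 2 ^ n : ℝ) * (dseg n ξ₂ ξ₃ / (1 + dseg n ξ₂ ξ₃)) := by
    intro n
    rw [← mul_add]
    apply mul_le_mul_of_nonneg_left _ (by positivity)
    calc dseg n ξ₁ ξ₃ / (1 + dseg n ξ₁ ξ₃)
        ≤ (dseg n ξ₁ ξ₂ + dseg n ξ₂ ξ₃) / (1 + (dseg n ξ₁ ξ₂ + dseg n ξ₂ ξ₃)) :=
          frac_mono (dseg_nonneg _ _ _) (dseg_triangle _ _ _ _)
      _ ≤ _ := frac_subadd (dseg_nonneg _ _ _) (dseg_nonneg _ _ _)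
  calc dXi ξ₁ ξ₃ ≤ ∑' n : ℕ, ((1 / 2 ^ n : ℝ) * (dseg n ξ₁ ξ₂ / (1 + dseg n ξ₁ ξ₂)) +
        (1 / 2 ^ n : ℝ) * (dseg n ξ₂ ξ₃ / (1 + dseg n ξ₂ ξ₃))) :=
        Summable.tsum_le_tsum h (dXi_summable _ _) ((dXi_summable ξ₁ ξ₂).add (dXi_summable ξ₂ ξ₃))
    _ = dXi ξ₁ ξ₂ + dXi ξ₂ ξ₃ := Summable.tsum_add (dXi_summable _ _) (dXi_summable _ _)

lemma eval_lip (M : ℝ) (hM : 0 < M) (h1 : ∀ s : ℝ, ‖ξ₁ s‖ ≤ M) (h2 : ∀ s : ℝ, ‖ξ₂ s‖ ≤ M) :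
    ‖ξ₁ 0 - ξ₂ 0‖ ≤ (1 + 2 * M) * dXi ξ₁ ξ₂ := by
  set a := ‖ξ₁ 0 - ξ₂ 0‖ with ha
  have ha0 : 0 ≤ a := norm_nonneg _
  have ha2M : a ≤ 2 * M := (norm_sub_le _ _).trans (by linarith [h1 0, h2 0])
  have hfrac : a / (1 + a) ≤ dXi ξ₁ ξ₂ := by
    have := frac0_le_dXi ξ₁ ξ₂
    rwa [dseg_zero] at this
  have key : a ≤ (1 + 2 * M) * (a / (1 + a)) := by
    rw [mul_div_assoc', le_div_iff₀ (by linarith)]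
    nlinarith
  calc a ≤ (1 + 2 * M) * (a / (1 + a)) := key
    _ ≤ (1 + 2 * M) * dXi ξ₁ ξ₂ := mul_le_mul_of_nonneg_left hfrac (by linarith)

end dXiLemmas

section cover
variable {X : Type*} [NormedAddCommGroup X]

lemma shift_apply (t s : ℝ) (g : C(ℝ, X)) : shift t g s = g (t + s) := rfl

lemma shift_apply_zero (t : ℝ) (g : C(ℝ, X)) : shift t g 0 = g t := by
  rw [shift_apply, add_zero]

lemma shift_bound (t : ℝ) (g : C(ℝ, X)) (M : ℝ) (hg : ∀ u : ℝ, ‖g u‖ ≤ M) (s : ℝ) :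
    ‖shift t g s‖ ≤ M := hg (t + s)

lemma one_le_coverN {Y : Type*} [MetricSpace Y] {K : Set Y} (hK : K.Nonempty) (r : ℝ) :
    1 ≤ coverN K r := by
  apply le_sInf
  rintro n ⟨s, rfl, hcov⟩
  obtain ⟨x, hx⟩ := hK
  obtain ⟨c, hc, -⟩ := Set.mem_iUnion₂.1 (hcov hx)
  have : 0 < s.card := Finset.card_pos.2 ⟨c, hc⟩
  exact_mod_cast this

lemma one_le_coverNXi {K : Set C(ℝ, X)} (hK : K.Nonempty) (r : ℝ) :
    1 ≤ coverNXi K r := by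
  apply le_sInf
  rintro n ⟨s, rfl, hcov⟩
  obtain ⟨x, hx⟩ := hK
  obtain ⟨c, hc, -⟩ := hcov x hx
  have : 0 < s.card := Finset.card_pos.2 ⟨c, hc⟩
  exact_mod_cast this

lemma coverNXi_mono {K K' : Set C(ℝ, X)} (h : K ⊆ K') (r : ℝ) :
    coverNXi K r ≤ coverNXi K' r := by
  apply sInf_le_sInf
  rintro n ⟨s, hcard, hcov⟩
  exact ⟨s, hcard, fun ξ hξ => hcov ξ (h hξ)⟩

lemma coverN_range_le (M : ℝ) (hM : 0 < M) (g : C(ℝ, X)) (hg : ∀ t : ℝ, ‖g t‖ ≤ M)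
    (r : ℝ) (hr : 0 < r) :
    coverN (Set.range ⇑g) (2 * (1 + 2 * M) * r) ≤
      coverNXi (Set.range fun t : ℝ => shift t g) r := by
  classical
  apply le_sInf
  rintro n ⟨s, rfl, hcov⟩
  set φ : C(ℝ, X) → X := fun c =>
    if h : ∃ t' : ℝ, dXi c (shift t' g) < r then g h.choose else 0 with hφ
  have hle : ((s.image φ).card : ℝ≥0∞) ≤ (s.card : ℝ≥0∞) := by
    exact_mod_cast Finset.card_image_le
  refine le_trans (sInf_le ⟨s.image φ, rfl, ?_⟩) hle
  rintro x ⟨t, rfl⟩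
  obtain ⟨c, hcs, hc⟩ := hcov (shift t g) ⟨t, rfl⟩
  have hex : ∃ t' : ℝ, dXi c (shift t' g) < r := ⟨t, hc⟩
  have hφc : φ c = g hex.choose := dif_pos hex
  have hc' : dXi c (shift hex.choose g) < r := hex.choose_spec
  apply Set.mem_iUnion.2
  refine ⟨φ c, Set.mem_iUnion.2 ⟨Finset.mem_image_of_mem φ hcs, ?_⟩⟩
  rw [Metric.mem_ball, dist_eq_norm, hφc]
  have hnorm : ‖shift t g 0 - shift hex.choose g 0‖ ≤
      (1 + 2 * M) * dXi (shift t g) (shift hex.choose g) :=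
    eval_lip _ _ M hM (shift_bound t g M hg) (shift_bound _ g M hg)
  rw [shift_apply_zero, shift_apply_zero] at hnorm
  have htri : dXi (shift t g) (shift hex.choose g) < 2 * r := by
    calc dXi (shift t g) (shift hex.choose g)
        ≤ dXi (shift t g) c + dXi c (shift hex.choose g) := dXi_triangle _ _ _
      _ < r + r := by rw [dXi_comm]; exact add_lt_add hc hc'
      _ = 2 * r := by ring
  calc ‖g t - g hex.choose‖ ≤ (1 + 2 * M) * dXi (shift t g) (shift hex.choose g) := hnorm
    _ < (1 + 2 * M) * (2 * r) := by
        apply mul_lt_mul_of_pos_left htri (by linarith)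
    _ = 2 * (1 + 2 * M) * r := by ring

end cover

lemma dim_le_dim (c : ℝ) (hc : 1 < c) (NA NB : ℝ → ℝ≥0∞)
    (hAB : ∀ r : ℝ, 0 < r → NA (c * r) ≤ NB r) (hA1 : ∀ r : ℝ, 1 ≤ NA r) :
    Filter.limsup (fun r : ℝ =>
      if NA r = ⊤ then (⊤ : ℝ≥0∞)
      else ENNReal.ofReal (Real.log (NA r).toReal / (-Real.log r))) (nhdsWithin 0 (Set.Ioi 0)) ≤
    Filter.limsup (fun r : ℝ =>
      if NB r = ⊤ then (⊤ : ℝ≥0∞)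
      else ENNReal.ofReal (Real.log (NB r).toReal / (-Real.log r))) (nhdsWithin 0 (Set.Ioi 0)) := by
  have hc0 : (0:ℝ) < c := lt_trans one_pos hc
  set FA : ℝ → ℝ≥0∞ := fun r =>
    if NA r = ⊤ then (⊤ : ℝ≥0∞)
    else ENNReal.ofReal (Real.log (NA r).toReal / (-Real.log r)) with hFA
  set FB : ℝ → ℝ≥0∞ := fun r =>
    if NB r = ⊤ then (⊤ : ℝ≥0∞)
    else ENNReal.ofReal (Real.log (NB r).toReal / (-Real.log r)) with hFB
  -- reparametrize
  have hmap : Filter.map (fun r : ℝ => c * r) (𝓝[>] (0:ℝ)) = 𝓝[>] (0:ℝ)  := by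
    conv_lhs => rw [← comap_mulLeft_nhdsGT_zero hc0]
    exact Filter.map_comap_of_surjective
      (fun y => ⟨y / c, by field_simp⟩) _
  have key : Filter.limsup (fun r : ℝ => FA (c * r)) (𝓝[>] (0:ℝ)) =
      Filter.limsup FA (𝓝[>] (0:ℝ)) := by
    have h := Filter.limsup_comp FA (fun r : ℝ => c * r) (𝓝[>] (0:ℝ))
    rw [hmap] at h
    exact h
  rw [← key]
  set S := Filter.limsup FB (𝓝[>] (0:ℝ)) with hS
  -- main estimate with ε
  have main : ∀ ε : ℝ, 0 < ε →
      Filter.limsup (fun r : ℝ => FA (c * r)) (𝓝[>] (0:ℝ)) ≤ ENNReal.ofReal (1 + ε) * S := by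
    intro ε hε
    have hr₀ : 0 < min 1 (Real.exp (-Real.log c / ε)) / c := by positivity
    have hev : ∀ᶠ r in 𝓝[>] (0:ℝ), FA (c * r) ≤ ENNReal.ofReal (1 + ε) * FB r := by
      filter_upwards [Ioo_mem_nhdsGT_of_mem (Set.mem_Ico.2 ⟨le_refl (0:ℝ), hr₀⟩),
        self_mem_nhdsWithin] with r hr hr'
      have hrpos : (0:ℝ) < r := hr.1
      have hcr1 : c * r < 1 := by
        have := hr.2
        calc c * r < c * (min 1 (Real.exp (-Real.log c / ε)) / c) := by
              exact mul_lt_mul_of_pos_left this hc0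
          _ = min 1 (Real.exp (-Real.log c / ε)) := by field_simp
          _ ≤ 1 := min_le_left _ _
      have hcrexp : c * r ≤ Real.exp (-Real.log c / ε) := by
        have := hr.2
        calc c * r ≤ c * (min 1 (Real.exp (-Real.log c / ε)) / c) :=
              le_of_lt (mul_lt_mul_of_pos_left this hc0)
          _ = min 1 (Real.exp (-Real.log c / ε)) := by field_simp
          _ ≤ _ := min_le_right _ _
      have hcrpos : 0 < c * r := by positivity
      have hr1 : r < 1 := by nlinarith
      -- denominators
      have hd1 : 0 < -Real.log (c * r) := by
        simpa using neg_pos.2 (Real.log_neg hcrpos hcr1)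
      have hd2 : 0 < -Real.log r := by
        simpa using neg_pos.2 (Real.log_neg hrpos hr1)
      have hlogsplit : Real.log (c * r) = Real.log c + Real.log r :=
        Real.log_mul (ne_of_gt hc0) (ne_of_gt hrpos)
      have hlogc : 0 ≤ Real.log c := Real.log_nonneg hc.le
      have hlogc_le : Real.log c ≤ ε * (-Real.log (c * r)) := by
        have h1 : Real.log (c * r) ≤ -Real.log c / ε := by
          calc Real.log (c * r) ≤ Real.log (Real.exp (-Real.log c / ε)) :=
                Real.log_le_log hcrpos hcrexp
            _ = -Real.log c / ε := Real.log_exp _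
        have h2 : ε * Real.log (c * r) ≤ ε * (-Real.log c / ε) :=
          mul_le_mul_of_nonneg_left h1 hε.le
        have h3 : ε * (-Real.log c / ε) = -Real.log c := by field_simp
        nlinarith
      -- case split on NB r
      by_cases hB : NB r = ⊤
      · have : FB r = ⊤ := by simp [hFB, hB]
        rw [this, ENNReal.mul_top (by simp; linarith)]
        exact le_top
      · have hA : NA (c * r) ≠ ⊤ := ne_top_of_le_ne_top hB (hAB r hrpos)
        set x := (NA (c * r)).toReal with hx
        set y := (NB r).toReal with hy
        have hx1 : 1 ≤ x := by
          have := ENNReal.toReal_mono hA (hA1 (c * r))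
          simpa using this
        have hxy : x ≤ y := ENNReal.toReal_mono hB (hAB r hrpos)
        have hlogx0 : 0 ≤ Real.log x := Real.log_nonneg hx1
        have hlogxy : Real.log x ≤ Real.log y := Real.log_le_log (by linarith) hxy
        have hlogy0 : 0 ≤ Real.log y := le_trans hlogx0 hlogxy
        have hquot : Real.log x / (-Real.log (c * r)) ≤
            (1 + ε) * (Real.log y / (-Real.log r)) := by
          rw [div_le_iff₀ hd1]
          have expand : (1 + ε) * (Real.log y / -Real.log r) * -Real.log (c * r) =
              ((1 + ε) * Real.log y * -Real.log (c * r)) / (-Real.log r) := by ring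
          rw [expand, le_div_iff₀ hd2]
          have hd21 : -Real.log r = -Real.log (c * r) + Real.log c := by
            rw [hlogsplit]; ring
          nlinarith [mul_le_mul hlogxy hlogc_le hlogc hlogy0,
            mul_le_mul_of_nonneg_right hlogxy hd1.le]
        have hFAv : FA (c * r) = ENNReal.ofReal (Real.log x / (-Real.log (c * r))) := by
          simp [hFA, hA, hx]
        have hFBv : FB r = ENNReal.ofReal (Real.log y / (-Real.log r)) := by
          simp [hFB, hB, hy]
        rw [hFAv, hFBv, ← ENNReal.ofReal_mul (by linarith : (0:ℝ) ≤ 1 + ε)]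
        exact ENNReal.ofReal_le_ofReal hquot
    calc Filter.limsup (fun r : ℝ => FA (c * r)) (𝓝[>] (0:ℝ))
        ≤ Filter.limsup (fun r : ℝ => ENNReal.ofReal (1 + ε) * FB r) (𝓝[>] (0:ℝ)) :=
          Filter.limsup_le_limsup hev
      _ = ENNReal.ofReal (1 + ε) * S :=
          ENNReal.limsup_const_mul_of_ne_top ENNReal.ofReal_ne_top
  -- conclude
  apply ENNReal.le_of_forall_pos_le_add
  intro δ hδ hStop
  set ε : ℝ := (δ : ℝ) / (S.toReal + 1) with hεdef
  have hStoReal : 0 ≤ S.toReal := ENNReal.toReal_nonneg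
  have hεpos : 0 < ε := by positivity
  calc Filter.limsup (fun r : ℝ => FA (c * r)) (𝓝[>] (0:ℝ))
      ≤ ENNReal.ofReal (1 + ε) * S := main ε hεpos
    _ = S + ENNReal.ofReal ε * S := by
        rw [ENNReal.ofReal_add (by norm_num) hεpos.le, add_mul, ENNReal.ofReal_one, one_mul]
    _ ≤ S + δ := by
        gcongr
        have : ENNReal.ofReal ε * S = ENNReal.ofReal (ε * S.toReal) := by
          rw [ENNReal.ofReal_mul hεpos.le, ENNReal.ofReal_toReal hStop.ne]
        rw [this]
        calc ENNReal.ofReal (ε * S.toReal) ≤ ENNReal.ofReal (δ : ℝ) := by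
              apply ENNReal.ofReal_le_ofReal
              rw [hεdef, div_mul_eq_mul_div, div_le_iff₀ (by positivity)]
              nlinarith [hδ.le, NNReal.coe_nonneg δ]
          _ = (δ : ℝ≥0∞) := ENNReal.ofReal_coe_nnreal


lemma dimBoxXi_mono {X : Type*} [NormedAddCommGroup X] {K K' : Set C(ℝ, X)}
    (hK : K.Nonempty) (h : K ⊆ K') : dimBoxXi K ≤ dimBoxXi K' := by
  unfold dimBoxXi
  apply Filter.limsup_le_limsup (Filter.Eventually.of_forall ?_)
  intro r
  by_cases hB : coverNXi K' r = ⊤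
  · simp [hB]
  · have hA : coverNXi K r ≠ ⊤ := ne_top_of_le_ne_top hB (coverNXi_mono h r)
    rw [if_neg hA, if_neg hB]
    have h1K : (1:ℝ≥0∞) ≤ coverNXi K r := one_le_coverNXi hK r
    have htK : 1 ≤ (coverNXi K r).toReal := by
      have := ENNReal.toReal_mono hA h1K
      simpa using this
    have hnum : 0 ≤ Real.log (coverNXi K r).toReal := Real.log_nonneg htK
    have hmono : Real.log (coverNXi K r).toReal ≤ Real.log (coverNXi K' r).toReal :=
      Real.log_le_log (by linarith) (ENNReal.toReal_mono hB (coverNXi_mono h r))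
    rcases le_or_gt (-Real.log r) 0 with hd | hd
    · have h0 : Real.log (coverNXi K r).toReal / (-Real.log r) ≤ 0 :=
        div_nonpos_of_nonneg_of_nonpos hnum hd
      rw [ENNReal.ofReal_eq_zero.2 h0]
      exact zero_le
    · apply ENNReal.ofReal_le_ofReal
      gcongr


/-- (i) for uniformly bounded `ξ₁, ξ₂`, evaluation at `0` satisfies
`‖ξ₁(0) - ξ₂(0)‖ ≤ (1 + 2M) d_Ξ(ξ₁,ξ₂)`; (ii) consequently, for bounded `g` the box-counting
dimension of the range `g(ℝ)` in `X` is at most that of the orbit `{θ_t g}` in `(Ξ,d_Ξ)`; in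
particular if `g(ℝ)` has infinite box-counting dimension then so does the hull `H_Ξ(g)`. -/
theorem statement15 {X : Type*} [NormedAddCommGroup X] (M : ℝ) (hM : 0 < M) :
    (∀ ξ₁ ξ₂ : C(ℝ, X), (∀ s : ℝ, ‖ξ₁ s‖ ≤ M) → (∀ s : ℝ, ‖ξ₂ s‖ ≤ M) →
      ‖ξ₁ 0 - ξ₂ 0‖ ≤ (1 + 2 * M) * dXi ξ₁ ξ₂) ∧
    (∀ g : C(ℝ, X), (∀ t : ℝ, ‖g t‖ ≤ M) →
      dimBox (Set.range ⇑g) ≤ dimBoxXi (Set.range fun t : ℝ => shift t g) ∧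
      (dimBox (Set.range ⇑g) = ⊤ → dimBoxXi (hullXi g) = ⊤)) := by
  constructor
  · intro ξ₁ ξ₂ h1 h2
    exact eval_lip ξ₁ ξ₂ M hM h1 h2
  · intro g hg
    have hrange : (Set.range ⇑g).Nonempty := ⟨g 0, 0, rfl⟩
    have horbit : (Set.range fun t : ℝ => shift t g).Nonempty := ⟨shift 0 g, 0, rfl⟩
    have hmain : dimBox (Set.range ⇑g) ≤ dimBoxXi (Set.range fun t : ℝ => shift t g) := by
      unfold dimBox dimBoxXi
      exact dim_le_dim (2 * (1 + 2 * M)) (by linarith) _ _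
        (fun r hr => coverN_range_le M hM g hg r hr)
        (fun r => one_le_coverN hrange r)
    refine ⟨hmain, fun htop => ?_⟩
    have hsub : (Set.range fun t : ℝ => shift t g) ⊆ hullXi g := by
      rintro ξ ⟨t, rfl⟩
      intro ε hε
      exact ⟨t, by rw [dXi_self]; exact hε⟩
    have h2 := dimBoxXi_mono horbit hsub
    exact top_le_iff.1 (htop ▸ (hmain.trans h2))
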